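/- Let $S$ be a scheme of finite type over $\mathrm{Spec}\,\mathbb{Z}$. Then every nonempty locally closed subset $Z$ of the underlying topological space of $S$ contains a point that is a closed point of $S$. -/

import Mathlib

open AlgebraicGeometry

lemma int_isJacobsonRing : IsJacobsonRing ℤ := by
  rw [isJacobsonRing_iff_prime_eq]
  intro P hP
  by_cases hbot : P = ⊥
  · subst hbot
    refine le_antisymm (fun x hx => ?_) Ideal.le_jacobson
    rw [Ideal.mem_jacobson_bot] at hx
    have h1 := hx 1
    have h2 := hx (-1)
    simp only [mul_one, mul_neg, Int.isUnit_iff] at h1 h2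
    rw [Ideal.mem_bot]
    omega
  · have : P.IsMaximal := hP.isMaximal hbot
    exact Ideal.jacobson_eq_self_of_isMaximal

/-- **Density of closed points on arithmetic schemes.**
Let `S` be a scheme of finite type over `Spec ℤ` (i.e. the structure morphism
`S ⟶ Spec ℤ` is quasi-compact and locally of finite type).  Then every nonempty
locally closed subset `Z` of the underlying topological space of `S` contains a
point that is a closed point of `S`. -/
theorem exists_isClosed_point_of_isLocallyClosed_of_finiteType_over_int
    (S : Scheme) (f : S ⟶ Spec (CommRingCat.of ℤ))
    [LocallyOfFiniteType f] [QuasiCompact f]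
    (Z : Set S) (hZ : IsLocallyClosed Z) (hne : Z.Nonempty) :
    ∃ x ∈ Z, IsClosed ({x} : Set S) := by
  have hJ : ∀ V : S.affineOpens, IsJacobsonRing Γ(S, V.1) := by
    intro V
    have hft := LocallyOfFiniteType.finiteType_appLE f
      (isAffineOpen_top _) V.2 le_top
    have hZJ : IsJacobsonRing Γ(Spec (CommRingCat.of ℤ), ⊤) :=
      (isJacobsonRing_iso
        (Scheme.ΓSpecIso (CommRingCat.of ℤ)).commRingCatIsoToRingEquiv).mpr
        int_isJacobsonRing
    exact hft.isJacobsonRing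
  have : JacobsonSpace S := by
    rw [TopologicalSpace.IsOpenCover.jacobsonSpace_iff (U := fun V : S.affineOpens => V.1)
      (iSup_affineOpens_eq_top S)]
    intro V
    have : IsJacobsonRing Γ(S, V.1) := hJ V
    have hPS : JacobsonSpace (Spec Γ(S, V.1)) :=
      inferInstanceAs (JacobsonSpace (PrimeSpectrum Γ(S, V.1)))
    exact .of_isOpenEmbedding (Scheme.homeoOfIso V.2.isoSpec).isOpenEmbedding
  obtain ⟨x, hx, hx'⟩ := nonempty_inter_closedPoints hne hZ
  exact ⟨x, hx, hx'⟩
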